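/- Let (σ_i)_{i ∈ Fin n} be a maximal CDP family. If the family is abelian (σ_i ∘ σ_j = σ_j ∘ σ_i for all i, j), then σ_0 is the identity permutation, σ_i ∘ σ_j = σ_{σ_i(j)} for all i, j, and for every i there exists j with σ_i⁻¹ = σ_j; hence the set {σ_i : i ∈ Fin n} is an abelian group of permutations under composition. Conversely, if the set {σ_i} is an abelian group under composition then the family is abelian. Thus a maximal CDP family is abelian if and only if it is an abelian group of permutations. -/

import Mathlib

/-- A maximal CDP family is abelian iff it forms an abelian group of permutations under
composition. Moreover, if it is abelian then `σ_0 = 1`, `σ_i ∘ σ_j = σ_{σ_i(j)}`, and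
every inverse `σ_i⁻¹` is again a member of the family. -/
theorem abelian_iff_abelian_group {n : ℕ} [NeZero n] (σ : Fin n → Equiv.Perm (Fin n))
    (hcdp : ∀ i j, i ≠ j → ∀ k, σ i k ≠ σ j k)
    (hnorm : ∀ i, σ i 0 = i) :
    ((∀ i j, σ i * σ j = σ j * σ i) →
      (σ 0 = 1 ∧ (∀ i j, σ i * σ j = σ (σ i j)) ∧ (∀ i, ∃ j, (σ i)⁻¹ = σ j))) ∧
    ((∀ i j, σ i * σ j = σ j * σ i) ↔
      ((∀ i j, ∃ k, σ i * σ j = σ k) ∧ (∀ i, ∃ j, (σ i)⁻¹ = σ j) ∧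
        (∀ i j, σ i * σ j = σ j * σ i))) := by
  have main : (∀ i j, σ i * σ j = σ j * σ i) →
      (σ 0 = 1 ∧ (∀ i j, σ i * σ j = σ (σ i j)) ∧ (∀ i, ∃ j, (σ i)⁻¹ = σ j)) := by
    intro hab
    have hsym : ∀ i j, σ i j = σ j i := by
      intro i j
      have := congrArg (fun e => e 0) (hab i j)
      simpa [hnorm] using this
    have h0 : σ 0 = 1 := by
      refine Equiv.ext fun k => ?_
      have := hsym 0 k
      simpa [hnorm] using this
    have hmul : ∀ i j, σ i * σ j = σ (σ i j) := by
      intro i j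
      refine Equiv.ext fun k => ?_
      calc (σ i * σ j) k = σ i (σ k j) := by rw [Equiv.Perm.mul_apply, hsym j k]
        _ = σ k (σ i j) := by
              have := congrArg (fun e => e j) (hab i k)
              simpa using this
        _ = σ (σ i j) k := hsym k (σ i j)
    refine ⟨h0, hmul, ?_⟩
    intro i
    refine ⟨(σ i)⁻¹ 0, ?_⟩
    have h : σ i * σ ((σ i)⁻¹ 0) = σ (σ i ((σ i)⁻¹ 0)) := hmul i _
    rw [show σ i ((σ i)⁻¹ 0) = 0 from (σ i).apply_symm_apply 0, h0] at h
    exact inv_eq_of_mul_eq_one_right h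
  refine ⟨main, ?_, fun h => h.2.2⟩
  intro hab
  obtain ⟨h0, hmul, hinv⟩ := main hab
  exact ⟨fun i j => ⟨σ i j, hmul i j⟩, hinv, hab⟩
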